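/- Reduction of the holonomy system to a second-order ODE: let c ∈ ℝ, let m : ℝ → ℂ be differentiable and nowhere vanishing, let n : ℝ → ℝ be differentiable, and let a, b : ℝ → ℂ be differentiable functions satisfying a'(t) = i c ( n(t) a(t) − m(t) · conj(b(t)) ) and b'(t) = i c ( n(t) b(t) + m(t) · conj(a(t)) ) for all t. Then a is twice differentiable and a''(t) = N(t) a(t) + M(t) a'(t) for all t, where M(t) := m'(t)/m(t) and N(t) := i c ( n'(t) − M(t) n(t) + i c ( |m(t)|² + n(t)² ) ). -/

import Mathlib

/-- Reduction of the holonomy system to a second-order ODE: if `a, b` solve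
`a' = ic(n a − m conj b)`, `b' = ic(n b + m conj a)` with `m` nowhere vanishing, then `a`
is twice differentiable with `a'' = N a + M a'`, where `M = m'/m` and
`N = ic(n' − M n + ic(|m|² + n²))`. -/
theorem holonomy_second_order_ODE (c : ℝ) (m m' : ℝ → ℂ)
    (hm : ∀ t : ℝ, HasDerivAt m (m' t) t) (hm0 : ∀ t : ℝ, m t ≠ 0)
    (n n' : ℝ → ℝ) (hn : ∀ t : ℝ, HasDerivAt n (n' t) t)
    (a b : ℝ → ℂ)
    (ha : ∀ t : ℝ, HasDerivAt a
      (Complex.I * c * ((n t : ℂ) * a t - m t * (starRingEnd ℂ) (b t))) t)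
    (hb : ∀ t : ℝ, HasDerivAt b
      (Complex.I * c * ((n t : ℂ) * b t + m t * (starRingEnd ℂ) (a t))) t) :
    ∀ t : ℝ, HasDerivAt
      (fun s : ℝ => Complex.I * c * ((n s : ℂ) * a s - m s * (starRingEnd ℂ) (b s)))
      ((Complex.I * c * ((n' t : ℂ) - (m' t / m t) * (n t : ℂ) +
          Complex.I * c * ((‖m t‖ ^ 2 + n t ^ 2 : ℝ) : ℂ))) * a t +
        (m' t / m t) *
          (Complex.I * c * ((n t : ℂ) * a t - m t * (starRingEnd ℂ) (b t)))) t := by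
  intro t
  have hnC : HasDerivAt (fun s : ℝ => ((n s : ℂ))) ((n' t : ℂ)) t :=
    (hn t).ofReal_comp
  have hcb : HasDerivAt (fun s : ℝ => (starRingEnd ℂ) (b s))
      (star (Complex.I * c * ((n t : ℂ) * b t + m t * (starRingEnd ℂ) (a t)))) t :=
    (hb t).star
  have h := (((hnC.mul (ha t)).sub ((hm t).mul hcb)).const_mul (Complex.I * (c : ℂ)))
  convert h using 1
  case e'_4 => rfl
  case e'_8 => rfl
  have hmt := hm0 t
  have habs : ((‖m t‖ ^ 2 : ℝ) : ℂ) = m t * (starRingEnd ℂ) (m t) := by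
    rw [show (‖m t‖ ^ 2 : ℝ) = Complex.normSq (m t) from Complex.sq_norm _,
      Complex.mul_conj]
  simp only [star_mul', star_add, star_sub, map_mul, map_add, Complex.star_def, map_ofNat,
    Complex.conj_I, Complex.conj_ofReal, RingHom.id_apply, Complex.conj_conj]
  push_cast [habs]
  field_simp
  ring
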